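/- For the optimal weight vector w*_i = (1/k)[1 + d/2 - (d/(2 k^{2/d}))·α_i] (i = 1,...,k), one has k^{-2/d}·∑_{i=1}^k α_i w*_i → (d+2)/(d+4) as k → ∞. -/

import Mathlib

open Filter Finset Topology


lemma mvt_rpow (s : ℝ) (hs : 1 ≤ s) (x : ℝ) (hx : 1 ≤ x) :
    s * (x - 1) ^ (s - 1) ≤ x ^ s - (x - 1) ^ s ∧
      x ^ s - (x - 1) ^ s ≤ s * x ^ (s - 1) := by
  have hx0 : (0:ℝ) ≤ x - 1 := by linarith
  have hlt : x - 1 < x := by linarith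
  have hs0 : (0:ℝ) ≤ s - 1 := by linarith
  have hderiv : ∀ y ∈ Set.Ioo (x-1) x,
      HasDerivAt (fun t : ℝ => t ^ s) (s * y ^ (s-1)) y := fun y _ =>
    Real.hasDerivAt_rpow_const (Or.inr hs)
  have hcont : ContinuousOn (fun t : ℝ => t ^ s) (Set.Icc (x-1) x) := fun y _ =>
    (Real.hasDerivAt_rpow_const (p := s) (x := y) (Or.inr hs)).continuousAt.continuousWithinAt
  obtain ⟨c, hc, hceq⟩ := exists_hasDerivAt_eq_slope (fun t : ℝ => t ^ s)
    (fun y => s * y ^ (s-1)) hlt hcont hderiv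
  have h1 : x - (x-1) = 1 := by ring
  rw [h1, div_one] at hceq
  have hc1 : x - 1 ≤ c := le_of_lt hc.1
  have hc2 : c ≤ x := le_of_lt hc.2
  constructor
  · rw [← hceq]
    have := Real.rpow_le_rpow hx0 hc1 hs0
    nlinarith
  · rw [← hceq]
    have := Real.rpow_le_rpow (le_trans hx0 hc1) hc2 hs0
    nlinarith

-- telescoping sum
lemma tele_rpow (s : ℝ) (hs : 0 < s) (k : ℕ) :
    ∑ n ∈ range k, (((n:ℝ)+1)^s - (n:ℝ)^s) = (k:ℝ)^s := by
  have h := Finset.sum_range_sub (f := fun n : ℕ => ((n:ℝ))^s) k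
  have h0 : ((0:ℕ):ℝ)^s = 0 := by
    simp [Real.zero_rpow (ne_of_gt hs)]
  rw [h0, sub_zero] at h
  rw [← h]
  apply Finset.sum_congr rfl
  intro n _
  push_cast
  ring_nf

set_option maxHeartbeats 1000000 in
theorem opt_weights_alpha_sum_limit (d : ℕ) (hd : 0 < d) :
    Tendsto (fun k : ℕ =>
      (∑ i ∈ Finset.Icc 1 k,
        ((i : ℝ) ^ (1 + 2 / (d : ℝ)) - ((i : ℝ) - 1) ^ (1 + 2 / (d : ℝ))) *
        ((1 / (k : ℝ)) * (1 + (d : ℝ) / 2 -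
          ((d : ℝ) / (2 * (k : ℝ) ^ (2 / (d : ℝ)))) *
            ((i : ℝ) ^ (1 + 2 / (d : ℝ)) - ((i : ℝ) - 1) ^ (1 + 2 / (d : ℝ))))))
        / (k : ℝ) ^ (2 / (d : ℝ)))
      atTop (nhds (((d : ℝ) + 2) / ((d : ℝ) + 4))) := by
  have hd0 : (0:ℝ) < d := by exact_mod_cast hd
  set r : ℝ := 2 / d with hrdef
  have hr0 : 0 < r := by positivity
  set p : ℝ := 1 + r with hpdef
  set q : ℝ := 1 + 2*r with hqdef
  have hp1 : 1 ≤ p := by simp [hpdef]; linarith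
  have hq1 : 1 ≤ q := by simp [hqdef]; linarith
  have hp0 : 0 < p := by linarith
  have hq0 : 0 < q := by linarith
  set G : ℝ → ℕ → ℝ := fun s n => ((n:ℝ)+1)^s - (n:ℝ)^s with hGdef
  have hGbound : ∀ s : ℝ, 1 ≤ s → ∀ n : ℕ,
      s * (n:ℝ)^(s-1) ≤ G s n ∧ G s n ≤ s * ((n:ℝ)+1)^(s-1) := by
    intro s hs n
    have h := mvt_rpow s hs ((n:ℝ)+1) (by linarith [Nat.cast_nonneg (α := ℝ) n])
    have e : ((n:ℝ)+1) - 1 = (n:ℝ) := by ring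
    rw [e] at h
    exact h
  set S2 : ℕ → ℝ := fun k => ∑ n ∈ range k, (G p n)^2 with hS2def
  have hpr : p - 1 = r := by rw [hpdef]; ring
  have hqr : q - 1 = 2*r := by rw [hqdef]; ring
  -- squared bound on G p n
  have hsq_ub : ∀ n : ℕ, (G p n)^2 ≤ (p^2/q) * G q (n+1) := by
    intro n
    have h1 := (hGbound p hp1 n).2
    have h2 := (hGbound q hq1 (n+1)).1
    rw [hpr] at h1
    rw [hqr] at h2
    have hx : (0:ℝ) < (n:ℝ)+1 := by positivity
    have hGnn : 0 ≤ G p n := by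
      have := (hGbound p hp1 n).1
      have : 0 ≤ p * (n:ℝ)^(p-1) := by positivity
      linarith [(hGbound p hp1 n).1]
    have hcast : ((n+1:ℕ):ℝ) = (n:ℝ)+1 := by push_cast; ring
    rw [hcast] at h2
    have hpow : (((n:ℝ)+1)^r)^2 = ((n:ℝ)+1)^(2*r) := by
      rw [← Real.rpow_natCast (((n:ℝ)+1)^r) 2, ← Real.rpow_mul (le_of_lt hx)]
      norm_num [mul_comm]
    have step1 : (G p n)^2 ≤ p^2 * ((n:ℝ)+1)^(2*r) := by
      have := mul_self_le_mul_self hGnn h1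
      calc (G p n)^2 = G p n * G p n := sq (G p n) ▸ by ring
        _ ≤ (p * ((n:ℝ)+1)^r) * (p * ((n:ℝ)+1)^r) := this
        _ = p^2 * (((n:ℝ)+1)^r)^2 := by ring
        _ = p^2 * ((n:ℝ)+1)^(2*r) := by rw [hpow]
    have step2 : p^2 * ((n:ℝ)+1)^(2*r) ≤ (p^2/q) * G q (n+1) := by
      rw [div_mul_eq_mul_div, le_div_iff₀ hq0]
      nlinarith [sq_nonneg p]
    exact step1.trans step2
  have hsq_lb : ∀ n : ℕ, (p^2/q) * G q n ≤ (G p (n+1))^2 := by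
    intro n
    have h1 := (hGbound p hp1 (n+1)).1
    have h2 := (hGbound q hq1 n).2
    rw [hpr] at h1
    rw [hqr] at h2
    have hx : (0:ℝ) < (n:ℝ)+1 := by positivity
    have hcast : ((n+1:ℕ):ℝ) = (n:ℝ)+1 := by push_cast; ring
    rw [hcast] at h1
    have hpow : (((n:ℝ)+1)^r)^2 = ((n:ℝ)+1)^(2*r) := by
      rw [← Real.rpow_natCast (((n:ℝ)+1)^r) 2, ← Real.rpow_mul (le_of_lt hx)]
      norm_num [mul_comm]
    have hnn : 0 ≤ p * ((n:ℝ)+1)^r := by positivity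
    have step1 : p^2 * ((n:ℝ)+1)^(2*r) ≤ (G p (n+1))^2 := by
      have := mul_self_le_mul_self hnn h1
      calc p^2 * ((n:ℝ)+1)^(2*r) = (p * ((n:ℝ)+1)^r) * (p * ((n:ℝ)+1)^r) := by
            rw [← hpow]; ring
        _ ≤ G p (n+1) * G p (n+1) := this
        _ = (G p (n+1))^2 := by ring
    have step2 : (p^2/q) * G q n ≤ p^2 * ((n:ℝ)+1)^(2*r) := by
      rw [div_mul_eq_mul_div, div_le_iff₀ hq0]
      nlinarith [sq_nonneg p]
    exact step2.trans step1
  -- upper bound on S2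
  have hS2_ub : ∀ k : ℕ, S2 k ≤ (p^2/q) * ((k:ℝ)+1)^q := by
    intro k
    have h1 : S2 k ≤ (p^2/q) * ∑ n ∈ range k, G q (n+1) :=
      (Finset.sum_le_sum (fun n _ => hsq_ub n)).trans_eq (by rw [Finset.mul_sum])
    have h2 : ∑ n ∈ range k, G q (n+1) = ((k:ℝ)+1)^q - 1 := by
      have h := Finset.sum_range_sub (f := fun n : ℕ => ((n:ℝ)+1)^q) k
      have e : ∀ n : ℕ, G q (n+1) = ((((n:ℕ):ℝ)+1)+1)^q - (((n:ℕ):ℝ)+1)^q := by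
        intro n; simp only [hGdef]; push_cast; ring_nf
      rw [Finset.sum_congr rfl (fun n _ => e n)]
      have e2 : (((0:ℕ):ℝ)+1)^q = 1 := by norm_num
      rw [e2] at h
      rw [← h]
      apply Finset.sum_congr rfl; intro n _; push_cast; ring_nf
    have h3 : (p^2/q) * (((k:ℝ)+1)^q - 1) ≤ (p^2/q) * ((k:ℝ)+1)^q := by
      have : 0 ≤ p^2/q := by positivity
      nlinarith
    calc S2 k ≤ (p^2/q) * (((k:ℝ)+1)^q - 1) := by rw [← h2]; exact h1
      _ ≤ _ := h3
  -- lower bound on S2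
  have hS2_lb : ∀ k : ℕ, 1 ≤ k → (p^2/q) * ((k:ℝ)-1)^q ≤ S2 k := by
    intro k hk
    obtain ⟨m, rfl⟩ := Nat.exists_eq_add_of_le hk
    have hsplit : S2 (1+m) = ∑ n ∈ range m, (G p (n+1))^2 + (G p 0)^2 := by
      rw [hS2def]
      simpa [add_comm 1 m] using Finset.sum_range_succ' (fun n => (G p n)^2) m
    have h1 : (p^2/q) * ∑ n ∈ range m, G q n ≤ ∑ n ∈ range m, (G p (n+1))^2 := by
      rw [Finset.mul_sum]
      exact Finset.sum_le_sum (fun n _ => hsq_lb n)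
    have h2 : ∑ n ∈ range m, G q n = (m:ℝ)^q := tele_rpow q hq0 m
    have hcast : ((1+m:ℕ):ℝ) - 1 = (m:ℝ) := by push_cast; ring
    rw [hcast, hsplit]
    rw [h2] at h1
    nlinarith [sq_nonneg (G p 0)]
  -- the squeeze
  have hT : Tendsto (fun k : ℕ => S2 k / (k:ℝ)^q) atTop (𝓝 (p^2/q)) := by
    have hlim1 : Tendsto (fun k : ℕ => (p^2/q) * (((k:ℝ)-1)/(k:ℝ))^q) atTop
        (𝓝 (p^2/q)) := by
      have hb : Tendsto (fun k : ℕ => ((k:ℝ)-1)/(k:ℝ)) atTop (𝓝 1) := by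
        have h0 : Tendsto (fun k : ℕ => 1 - 1/(k:ℝ)) atTop (𝓝 (1 - 0)) :=
          tendsto_const_nhds.sub tendsto_one_div_atTop_nhds_zero_nat
        rw [sub_zero] at h0
        apply h0.congr'
        filter_upwards [eventually_ge_atTop 1] with k hk
        have : (k:ℝ) ≠ 0 := by positivity
        field_simp
      have := (hb.rpow_const (Or.inr (le_of_lt hq0)))
      rw [Real.one_rpow] at this
      simpa using tendsto_const_nhds.mul this
    have hlim2 : Tendsto (fun k : ℕ => (p^2/q) * (((k:ℝ)+1)/(k:ℝ))^q) atTop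
        (𝓝 (p^2/q)) := by
      have hb : Tendsto (fun k : ℕ => ((k:ℝ)+1)/(k:ℝ)) atTop (𝓝 1) := by
        have h0 : Tendsto (fun k : ℕ => 1 + 1/(k:ℝ)) atTop (𝓝 (1 + 0)) :=
          tendsto_const_nhds.add tendsto_one_div_atTop_nhds_zero_nat
        rw [add_zero] at h0
        apply h0.congr'
        filter_upwards [eventually_ge_atTop 1] with k hk
        have : (k:ℝ) ≠ 0 := by positivity
        field_simp
      have := (hb.rpow_const (Or.inr (le_of_lt hq0)))
      rw [Real.one_rpow] at this
      simpa using tendsto_const_nhds.mul this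
    apply tendsto_of_tendsto_of_tendsto_of_le_of_le' hlim1 hlim2
    · filter_upwards [eventually_ge_atTop 1] with k hk
      have hk0 : (0:ℝ) < k := by exact_mod_cast hk
      have hkq : (0:ℝ) < (k:ℝ)^q := Real.rpow_pos_of_pos hk0 q
      have hnum : (0:ℝ) ≤ (k:ℝ)-1 := by
        have : (1:ℝ) ≤ k := by exact_mod_cast hk
        linarith
      calc (p^2/q) * (((k:ℝ)-1)/(k:ℝ))^q
          = ((p^2/q) * ((k:ℝ)-1)^q) / (k:ℝ)^q := by
            rw [Real.div_rpow hnum (le_of_lt hk0)]; ring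
        _ ≤ S2 k / (k:ℝ)^q := by
            apply div_le_div_of_nonneg_right (hS2_lb k hk) hkq.le
    · filter_upwards [eventually_ge_atTop 1] with k hk
      have hk0 : (0:ℝ) < k := by exact_mod_cast hk
      have hkq : (0:ℝ) < (k:ℝ)^q := Real.rpow_pos_of_pos hk0 q
      have hnum : (0:ℝ) ≤ (k:ℝ)+1 := by positivity
      calc S2 k / (k:ℝ)^q
          ≤ ((p^2/q) * ((k:ℝ)+1)^q) / (k:ℝ)^q := by
            apply div_le_div_of_nonneg_right (hS2_ub k) hkq.le
        _ = (p^2/q) * (((k:ℝ)+1)/(k:ℝ))^q := by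
            rw [Real.div_rpow hnum (le_of_lt hk0)]; ring
  -- assemble
  have hfinal : Tendsto (fun k : ℕ => (1 + (d:ℝ)/2) - ((d:ℝ)/2) * (S2 k / (k:ℝ)^q))
      atTop (nhds ((1 + (d:ℝ)/2) - ((d:ℝ)/2) * (p^2/q))) :=
    tendsto_const_nhds.sub (tendsto_const_nhds.mul hT)
  have hd' : (d:ℝ) ≠ 0 := ne_of_gt hd0
  have hval : (1 + (d:ℝ)/2) - ((d:ℝ)/2) * (p^2/q) = ((d:ℝ)+2)/((d:ℝ)+4) := by
    rw [hpdef, hqdef, hrdef]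
    have h4 : (d:ℝ) + 4 ≠ 0 := by positivity
    have h5 : (1:ℝ) + 2*(2/(d:ℝ)) ≠ 0 := by positivity
    field_simp
    ring
  rw [hval] at hfinal
  apply hfinal.congr'
  filter_upwards [eventually_ge_atTop 1] with k hk
  have hk0 : (0:ℝ) < k := by exact_mod_cast hk
  have hkr : (0:ℝ) < (k:ℝ)^r := Real.rpow_pos_of_pos hk0 r
  have hkp : (k:ℝ)^p = k * (k:ℝ)^r := by
    rw [hpdef, Real.rpow_add hk0, Real.rpow_one]
  have hkq : (k:ℝ)^q = k * ((k:ℝ)^r * (k:ℝ)^r) := by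
    rw [hqdef, show (1:ℝ) + 2*r = 1 + (r + r) by ring, Real.rpow_add hk0,
      Real.rpow_add hk0, Real.rpow_one]
  have hsum : ∑ i ∈ Finset.Icc 1 k,
      ((i : ℝ) ^ p - ((i : ℝ) - 1) ^ p) *
        ((1 / (k : ℝ)) * (1 + (d : ℝ) / 2 -
          ((d : ℝ) / (2 * (k : ℝ) ^ r)) * ((i : ℝ) ^ p - ((i : ℝ) - 1) ^ p)))
      = ((1+(d:ℝ)/2)/k) * (k:ℝ)^p - ((d:ℝ)/(2*(k:ℝ)^r*k)) * S2 k := by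
    rw [← Finset.Ico_add_one_right_eq_Icc, Finset.sum_Ico_eq_sum_range]
    simp only [Nat.add_sub_cancel]
    have e : ∀ n : ℕ, (((1+n:ℕ):ℝ)^p - (((1+n:ℕ):ℝ)-1)^p) *
        ((1/(k:ℝ))*(1 + (d:ℝ)/2 -
          ((d:ℝ)/(2*(k:ℝ)^r)) * ((((1+n:ℕ):ℝ))^p - (((1+n:ℕ):ℝ)-1)^p)))
        = ((1+(d:ℝ)/2)/k) * G p n - ((d:ℝ)/(2*(k:ℝ)^r*k)) * (G p n)^2 := by
      intro n
      have c1 : ((1+n:ℕ):ℝ) = (n:ℝ)+1 := by push_cast; ring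
      rw [c1]
      simp only [hGdef]
      have c2 : ((n:ℝ)+1) - 1 = (n:ℝ) := by ring
      rw [c2]
      field_simp
    rw [Finset.sum_congr rfl (fun n _ => e n), Finset.sum_sub_distrib,
      ← Finset.mul_sum, ← Finset.mul_sum]
    have htel : ∑ n ∈ range k, G p n = (k:ℝ)^p := tele_rpow p hp0 k
    rw [htel]
  rw [hsum, hkp, hkq]
  field_simp
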